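/- Let E8 = { [[0,1],[2,1]], [[0,2],[1,1]], [[1,1],[2,0]], [[1,2],[1,0]], [[2,0],[1,2]], [[2,0],[2,2]], [[2,1],[0,2]], [[2,2],[0,2]] } over GF(3). Then for every Y ∈ E8, exactly three of the eight matrices Y' ∈ E8 satisfy rank(Y + Y') = 1; in particular there are exactly 24 ordered pairs (R,S) ∈ E8 × E8 with rank(R + S) = 1. -/
import Mathlib


open Matrix

abbrev F3 := ZMod 3

/-- The eight special matrices of `GL(2,3)`. -/
def E8 : Set (Matrix (Fin 2) (Fin 2) F3) :=
  {!![0, 1; 2, 1], !![0, 2; 1, 1], !![1, 1; 2, 0], !![1, 2; 1, 0],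
   !![2, 0; 1, 2], !![2, 0; 2, 2], !![2, 1; 0, 2], !![2, 2; 0, 2]}

/-- The eight matrices as a `Finset`. -/
def E8f : Finset (Matrix (Fin 2) (Fin 2) F3) :=
  {!![0, 1; 2, 1], !![0, 2; 1, 1], !![1, 1; 2, 0], !![1, 2; 1, 0],
   !![2, 0; 1, 2], !![2, 0; 2, 2], !![2, 1; 0, 2], !![2, 2; 0, 2]}

lemma E8_eq_coe : E8 = ↑E8f := by
  ext x
  simp [E8, E8f]

lemma rank_one_iff (A : Matrix (Fin 2) (Fin 2) F3) :
    A.rank = 1 ↔ A ≠ 0 ∧ A.det = 0 := by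
  constructor
  · intro h
    constructor
    · rintro rfl
      rw [Matrix.rank_zero] at h
      exact one_ne_zero h.symm
    · by_contra hd
      have hu : IsUnit A := (Matrix.isUnit_iff_isUnit_det A).mpr (isUnit_iff_ne_zero.mpr hd)
      have := Matrix.rank_of_isUnit A hu
      rw [h] at this
      simp [Fintype.card_fin] at this
  · rintro ⟨hne, hdet⟩
    -- rank ≠ 0
    have h0 : A.rank ≠ 0 := by
      intro h
      apply hne
      rw [Matrix.rank] at h
      have hbot : LinearMap.range A.mulVecLin = ⊥ := Submodule.finrank_eq_zero.mp h
      have hz : A.mulVecLin = 0 := LinearMap.range_eq_bot.mp hbot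
      ext i j
      have : A.mulVec (Pi.single j 1) = 0 := by
        have := congrFun (congrArg (fun f => f.toFun) hz) (Pi.single j 1)
        simpa using this
      have := congrFun this i
      simpa [Matrix.mulVec_single] using this
    -- rank ≤ 1
    have h1 : A.rank ≤ 1 := by
      obtain ⟨v, hv, hAv⟩ := (Matrix.exists_mulVec_eq_zero_iff).mpr hdet
      have hker : LinearMap.ker A.mulVecLin ≠ ⊥ := by
        intro h
        apply hv
        have : v ∈ LinearMap.ker A.mulVecLin := by
          simpa [Matrix.mulVecLin] using hAv
        rw [h] at this
        simpa using this
      have hkerpos : 0 < Module.finrank F3 (LinearMap.ker A.mulVecLin) := by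
        rcases Nat.eq_zero_or_pos (Module.finrank F3 (LinearMap.ker A.mulVecLin)) with h | h
        · exact absurd (Submodule.finrank_eq_zero.mp h) hker
        · exact h
      have hrn := LinearMap.finrank_range_add_finrank_ker A.mulVecLin
      rw [Module.finrank_pi] at hrn
      simp only [Fintype.card_fin] at hrn
      rw [Matrix.rank]
      omega
    omega

lemma rank_pred (Y Y' : Matrix (Fin 2) (Fin 2) F3) :
    (Y + Y').rank = 1 ↔ (Y + Y' ≠ 0 ∧ (Y + Y').det = 0) := rank_one_iff _

/-- For every `Y ∈ E8`, exactly three of the eight matrices `Y' ∈ E8`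
satisfy `rank (Y + Y') = 1`; in particular there are exactly 24 ordered pairs
`(R, S) ∈ E8 × E8` with `rank (R + S) = 1`. -/
theorem stmt3 :
    (∀ Y ∈ E8, {Y' ∈ E8 | (Y + Y').rank = 1}.ncard = 3) ∧
    {p : Matrix (Fin 2) (Fin 2) F3 × Matrix (Fin 2) (Fin 2) F3 |
      p.1 ∈ E8 ∧ p.2 ∈ E8 ∧ (p.1 + p.2).rank = 1}.ncard = 24 := by
  constructor
  · intro Y hY
    have hset : {Y' ∈ E8 | (Y + Y').rank = 1} =
        ↑(E8f.filter fun Y' => Y + Y' ≠ 0 ∧ (Y + Y').det = 0) := by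
      ext x
      simp only [Set.mem_setOf_eq, Finset.coe_filter, E8_eq_coe, Finset.mem_coe,
        rank_pred]
    rw [hset, Set.ncard_coe_finset]
    rw [E8_eq_coe, Finset.mem_coe] at hY
    fin_cases hY <;> decide
  · have hset : {p : Matrix (Fin 2) (Fin 2) F3 × Matrix (Fin 2) (Fin 2) F3 |
        p.1 ∈ E8 ∧ p.2 ∈ E8 ∧ (p.1 + p.2).rank = 1} =
        ↑((E8f ×ˢ E8f).filter fun p => p.1 + p.2 ≠ 0 ∧ (p.1 + p.2).det = 0) := by
      ext p
      simp only [Set.mem_setOf_eq, Finset.coe_filter, Finset.mem_product, E8_eq_coe,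
        Finset.mem_coe, rank_pred, and_assoc]
    rw [hset, Set.ncard_coe_finset]
    decide
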